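/- The class of functions computable in representation u^(k) is not contained in the functions computable with oracle ∅^(k−1): the characteristic function χ^(k) of ∅^(k) is computable in representation u^(k) but is not ∅^(k−1)-computable. -/

import Mathlib

open scoped Classical

/-- Codes for oracle machines: Mathlib's `Nat.Partrec.Code` with an extra
constructor for the oracle. -/
inductive OCode : Type
  | zero : OCode
  | succ : OCode
  | left : OCode
  | right : OCode
  | oracle : OCode
  | pair : OCode → OCode → OCode
  | comp : OCode → OCode → OCode
  | prec : OCode → OCode → OCode
  | rfind' : OCode → OCode

/-- Evaluation of an oracle-machine code relative to an oracle `O`. -/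
def evalo (O : ℕ →. ℕ) : OCode → ℕ →. ℕ
  | .zero => fun _ => Part.some 0
  | .succ => fun n => Part.some (n + 1)
  | .left => fun n => Part.some n.unpair.1
  | .right => fun n => Part.some n.unpair.2
  | .oracle => O
  | .pair cf cg => fun n => Nat.pair <$> evalo O cf n <*> evalo O cg n
  | .comp cf cg => fun n => evalo O cg n >>= evalo O cf
  | .prec cf cg =>
    Nat.unpaired fun a n =>
      n.rec (evalo O cf a) fun y IH => do
        let i ← IH
        evalo O cg (Nat.pair a (Nat.pair y i))
  | .rfind' cf =>
    Nat.unpaired fun a m =>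
      (Nat.rfind fun n => (fun m => m = 0) <$> evalo O cf (Nat.pair a (n + m))).map (· + m)

/-- A standard (surjective) numbering of oracle-machine codes. -/
def ofNatOCode : ℕ → OCode
  | 0 => .zero
  | 1 => .succ
  | 2 => .left
  | 3 => .right
  | 4 => .oracle
  | n + 5 =>
    let m := n.div2.div2
    have hm : m < n + 5 := by
      simp only [m, Nat.div2_val]
      exact
        lt_of_le_of_lt (le_trans (Nat.div_le_self _ _) (Nat.div_le_self _ _))
          (Nat.succ_le_succ (Nat.le_add_right _ _))
    have _m1 : m.unpair.1 < n + 5 := lt_of_le_of_lt m.unpair_left_le hm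
    have _m2 : m.unpair.2 < n + 5 := lt_of_le_of_lt m.unpair_right_le hm
    match n.bodd, n.div2.bodd with
    | false, false => .pair (ofNatOCode m.unpair.1) (ofNatOCode m.unpair.2)
    | false, true => .comp (ofNatOCode m.unpair.1) (ofNatOCode m.unpair.2)
    | true, false => .prec (ofNatOCode m.unpair.1) (ofNatOCode m.unpair.2)
    | true, true => .rfind' (ofNatOCode m)
decreasing_by all_goals first | exact _m1 | exact _m2 | exact hm

/-- The characteristic (oracle) function of a set `C ⊆ ℕ`. -/
noncomputable def chi (C : Set ℕ) : ℕ →. ℕ :=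
  fun n => Part.some (if n ∈ C then 1 else 0)

/-- The Turing jump of a set `C ⊆ ℕ`. -/
noncomputable def jumpSet (C : Set ℕ) : Set ℕ :=
  { n : ℕ | (evalo (chi C) (ofNatOCode n) n).Dom }

/-- The `k`-th Turing jump `∅^(k)` of the empty set. -/
noncomputable def emptyJump : ℕ → Set ℕ
  | 0 => ∅
  | k + 1 => jumpSet (emptyJump k)

/-- The characteristic function (with values in `ℕ`) of a set `S ⊆ ℕ`. -/
noncomputable def chiNat (S : Set ℕ) : ℕ → ℕ :=
  fun n => if n ∈ S then 1 else 0

/-- The representation `u^(k)(n) = ⟨χ^(k)(n), …, χ'(n), n⟩`. -/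
noncomputable def uRep : ℕ → ℕ → ℕ
  | 0, n => n
  | k + 1, n => Nat.pair (chiNat (emptyJump (k + 1)) n) (uRep k n)

/-- Partial functions computable relative to an oracle `O : ℕ →. ℕ`. -/
inductive RecursiveInO (O : ℕ →. ℕ) : (ℕ →. ℕ) → Prop
  | zero : RecursiveInO O fun _ => Part.some 0
  | succ : RecursiveInO O fun n => Part.some (n + 1)
  | left : RecursiveInO O fun n => Part.some n.unpair.1
  | right : RecursiveInO O fun n => Part.some n.unpair.2
  | oracle : RecursiveInO O O
  | pair {f g : ℕ →. ℕ} : RecursiveInO O f → RecursiveInO O g →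
      RecursiveInO O fun n => Nat.pair <$> f n <*> g n
  | comp {f g : ℕ →. ℕ} : RecursiveInO O f → RecursiveInO O g →
      RecursiveInO O fun n => g n >>= f
  | prec {f g : ℕ →. ℕ} : RecursiveInO O f → RecursiveInO O g →
      RecursiveInO O (Nat.unpaired fun a n =>
        n.rec (f a) fun y IH => do let i ← IH; g (Nat.pair a (Nat.pair y i)))
  | rfind {f : ℕ →. ℕ} : RecursiveInO O f →
      RecursiveInO O fun a =>
        Nat.rfind fun n => (fun m => m = 0) <$> f (Nat.pair a n)


/-- Encoding of oracle codes, inverse to `ofNatOCode`. -/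
def encOCode : OCode → ℕ
  | .zero => 0
  | .succ => 1
  | .left => 2
  | .right => 3
  | .oracle => 4
  | .pair cf cg => 2 * (2 * Nat.pair (encOCode cf) (encOCode cg)) + 5
  | .comp cf cg => 2 * (2 * Nat.pair (encOCode cf) (encOCode cg) + 1) + 5
  | .prec cf cg => (2 * (2 * Nat.pair (encOCode cf) (encOCode cg)) + 1) + 5
  | .rfind' cf => (2 * (2 * encOCode cf + 1) + 1) + 5

theorem ofNatOCode_enc : ∀ c : OCode, ofNatOCode (encOCode c) = c := by
  intro c
  induction c <;> simp [encOCode, ofNatOCode, Nat.div2_val, *]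

theorem exists_ocode {O : ℕ →. ℕ} {f : ℕ →. ℕ} (h : RecursiveInO O f) :
    ∃ c : OCode, evalo O c = f := by
  induction h with
  | zero => exact ⟨.zero, rfl⟩
  | succ => exact ⟨.succ, rfl⟩
  | left => exact ⟨.left, rfl⟩
  | right => exact ⟨.right, rfl⟩
  | oracle => exact ⟨.oracle, rfl⟩
  | pair _ _ ihf ihg =>
      obtain ⟨cf, rfl⟩ := ihf; obtain ⟨cg, rfl⟩ := ihg
      exact ⟨.pair cf cg, rfl⟩
  | comp _ _ ihf ihg =>
      obtain ⟨cf, rfl⟩ := ihf; obtain ⟨cg, rfl⟩ := ihg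
      exact ⟨.comp cf cg, rfl⟩
  | prec _ _ ihf ihg =>
      obtain ⟨cf, rfl⟩ := ihf; obtain ⟨cg, rfl⟩ := ihg
      exact ⟨.prec cf cg, rfl⟩
  | rfind _ ihf =>
      obtain ⟨cf, rfl⟩ := ihf
      refine ⟨.comp (.rfind' cf) (.pair (.pair .left .right) .zero), funext fun a => ?_⟩
      simp only [evalo, Seq.seq, Part.bind_some, Part.map_eq_map, Part.bind_map]
      simp [Part.map_eq_map, Part.bind_some, Nat.unpaired, Nat.unpair_pair,
        Part.map_id']

theorem chiNat_eq_zero {S : Set ℕ} {a : ℕ} : chiNat S a = 0 ↔ a ∉ S := by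
  by_cases h : a ∈ S <;> simp [chiNat, h]

/-- The jump of `C` is not computable relative to `C`. -/
theorem jump_not_recursiveIn (C : Set ℕ) :
    ¬ RecursiveInO (chi C) (fun n => Part.some (chiNat (jumpSet C) n)) := by
  intro h
  -- the function diverging on the jump, converging off it
  have hg : RecursiveInO (chi C) fun a =>
      Nat.rfind fun n => (fun m => m = 0) <$>
        ((fun n : ℕ => Part.some n.unpair.1 >>=
          fun m => Part.some (chiNat (jumpSet C) m)) (Nat.pair a n)) :=
    RecursiveInO.rfind (RecursiveInO.comp h RecursiveInO.left)
  obtain ⟨c, hc⟩ := exists_ocode hg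
  have hdom : ∀ a, (evalo (chi C) c a).Dom ↔ a ∉ jumpSet C := by
    intro a
    rw [hc]
    simp only [Nat.unpair_pair, Part.bind_eq_bind, Part.map_eq_map, Part.bind_some, Part.map_some]
    refine Nat.rfind_dom.trans ?_
    rw [← chiNat_eq_zero]
    constructor
    · rintro ⟨n, hn, -⟩
      simpa using hn
    · intro ha
      exact ⟨0, by simpa using ha, fun {m} hm => absurd hm (Nat.not_lt_zero m)⟩
  have := hdom (encOCode c)
  rw [show evalo (chi C) c (encOCode c)
      = evalo (chi C) (ofNatOCode (encOCode c)) (encOCode c) by rw [ofNatOCode_enc]] at this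
  by_cases hmem : encOCode c ∈ jumpSet C
  · exact (this.mp hmem) hmem
  · exact hmem (this.mpr hmem)

/-- The characteristic function `χ^(k)` of `∅^(k)` is computable in the
representation `u^(k)` but not computable with oracle `∅^(k-1)`; hence the
functions computable in `u^(k)` are not contained in the `∅^(k-1)`-computable
ones. -/
theorem uRep_exceeds_previous_jump (k : ℕ) (hk : 1 ≤ k) :
    (∃ h : ℕ → ℕ, Computable h ∧
        ∀ n : ℕ, h (uRep k n) = uRep k (chiNat (emptyJump k) n)) ∧
    ¬ RecursiveInO (chi (emptyJump (k - 1)))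
        (fun n => Part.some (chiNat (emptyJump k) n)) := by
  obtain ⟨j, rfl⟩ : ∃ j, k = j + 1 := ⟨k - 1, (Nat.succ_pred_eq_of_pos hk).symm⟩
  constructor
  · refine ⟨fun m => if m.unpair.1 = 1 then uRep (j + 1) 1 else uRep (j + 1) 0, ?_, ?_⟩
    · exact (Primrec.ite
        (Primrec.eq.comp (Primrec.fst.comp Primrec.unpair) (Primrec.const 1))
        (Primrec.const _) (Primrec.const _)).to_comp
    · intro n
      by_cases hn : n ∈ emptyJump (j + 1) <;>
        simp [uRep, chiNat, hn]
  · simpa [emptyJump] using jump_not_recursiveIn (emptyJump j)
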